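/- Let Γ, Γ' , ℓ : ℝ^n → ℝ ∪ {+∞} be proper convex lower semicontinuous functions, β ∈ (0,1), λ > 0, and z_0 ∈ ℝ^n. Assume Γ'(u) ≥ β Γ(u) + (1−β) ℓ(u) for all u ∈ ℝ^n. Define Γ^λ(u) := Γ(u) + ‖u − z_0‖²/(2λ) and (Γ')^λ(u) := Γ'(u) + ‖u − z_0‖²/(2λ), and let z be a minimizer of Γ^λ over ℝ^n. Then for every point w ∈ ℝ^n: (Γ')^λ(w) − (1−β) ℓ(w) ≥ β [ Γ^λ(z) + ‖w − z‖²/(2λ) ]. -/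

import Mathlib

open RealInnerProductSpace


/-- Key inequality for the prox-regularized models of the stochastic cutting
plane framework.  Extended-real-valued (`ℝ ∪ {+∞}`) proper convex lsc functions
are modeled as `EReal`-valued functions that never take the value `⊥ = -∞` and
are somewhere finite.  The conclusion
`(Γ')^λ(w) - (1-β) ℓ(w) ≥ β [Γ^λ(z) + ‖w - z‖²/(2λ)]` is stated in the
equivalent subtraction-free form
`(1-β) ℓ(w) + β [Γ^λ(z) + ‖w - z‖²/(2λ)] ≤ (Γ')^λ(w)`. -/
theorem stmt3 {n : ℕ}
    (Γ Γ' ℓ : EuclideanSpace ℝ (Fin n) → EReal)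
    (hΓconv : ∀ x y : EuclideanSpace ℝ (Fin n), ∀ a b : ℝ, 0 ≤ a → 0 ≤ b →
      a + b = 1 → Γ (a • x + b • y) ≤ (a : EReal) * Γ x + (b : EReal) * Γ y)
    (hΓ'conv : ∀ x y : EuclideanSpace ℝ (Fin n), ∀ a b : ℝ, 0 ≤ a → 0 ≤ b →
      a + b = 1 → Γ' (a • x + b • y) ≤ (a : EReal) * Γ' x + (b : EReal) * Γ' y)
    (hℓconv : ∀ x y : EuclideanSpace ℝ (Fin n), ∀ a b : ℝ, 0 ≤ a → 0 ≤ b →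
      a + b = 1 → ℓ (a • x + b • y) ≤ (a : EReal) * ℓ x + (b : EReal) * ℓ y)
    (hΓlsc : LowerSemicontinuous Γ) (hΓ'lsc : LowerSemicontinuous Γ')
    (hℓlsc : LowerSemicontinuous ℓ)
    (hΓbot : ∀ x, Γ x ≠ ⊥) (hΓtop : ∃ x, Γ x ≠ ⊤)
    (hΓ'bot : ∀ x, Γ' x ≠ ⊥) (hΓ'top : ∃ x, Γ' x ≠ ⊤)
    (hℓbot : ∀ x, ℓ x ≠ ⊥) (hℓtop : ∃ x, ℓ x ≠ ⊤)
    (β : ℝ) (hβ : β ∈ Set.Ioo (0 : ℝ) 1)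
    (lam : ℝ) (hlam : 0 < lam)
    (z₀ : EuclideanSpace ℝ (Fin n))
    (hmaj : ∀ u, (β : EReal) * Γ u + ((1 - β : ℝ) : EReal) * ℓ u ≤ Γ' u)
    (z : EuclideanSpace ℝ (Fin n))
    (hz : ∀ u, Γ z + ((‖z - z₀‖ ^ 2 / (2 * lam) : ℝ) : EReal)
      ≤ Γ u + ((‖u - z₀‖ ^ 2 / (2 * lam) : ℝ) : EReal)) :
    ∀ w, ((1 - β : ℝ) : EReal) * ℓ w
        + (β : EReal) * (Γ z + ((‖z - z₀‖ ^ 2 / (2 * lam) : ℝ) : EReal)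
            + ((‖w - z‖ ^ 2 / (2 * lam) : ℝ) : EReal))
      ≤ Γ' w + ((‖w - z₀‖ ^ 2 / (2 * lam) : ℝ) : EReal) := by
  obtain ⟨hβ0, hβ1⟩ := hβ
  have h2l : (0:ℝ) < 2 * lam := by linarith
  -- Γ z is finite
  obtain ⟨x₀, hx₀⟩ := hΓtop
  have hztop : Γ z ≠ ⊤ := by
    intro h
    have hle := hz x₀
    rw [h, EReal.top_add_of_ne_bot (by simp)] at hle
    have : Γ x₀ + ((‖x₀ - z₀‖ ^ 2 / (2 * lam) : ℝ) : EReal) ≠ ⊤ :=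
      (EReal.add_lt_top hx₀ (by simp)).ne
    exact this (top_le_iff.1 hle)
  set gz : ℝ := (Γ z).toReal with hgzdef
  have hgz : Γ z = (gz : EReal) := (EReal.coe_toReal hztop (hΓbot z)).symm
  intro w
  by_cases hwt : Γ w = ⊤
  · -- right side is ⊤
    have hΓ'w : Γ' w = ⊤ := by
      have hle := hmaj w
      rw [hwt] at hle
      have h1 : (β : EReal) * ⊤ = ⊤ := by
        rw [EReal.mul_top_of_pos]; exact_mod_cast hβ0
      have h2 : ((1 - β : ℝ) : EReal) * ℓ w ≠ ⊥ := by
        have hgen : ∀ x : EReal, x ≠ ⊥ → ((1 - β : ℝ) : EReal) * x ≠ ⊥ := by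
          intro x hx
          induction x using EReal.rec with
          | bot => exact absurd rfl hx
          | coe r => rw [← EReal.coe_mul]; exact EReal.coe_ne_bot _
          | top =>
              rw [EReal.mul_top_of_pos (by exact_mod_cast (by linarith : (0:ℝ) < 1 - β))]
              simp
        exact hgen _ (hℓbot w)
      rw [h1, EReal.top_add_of_ne_bot h2] at hle
      exact top_le_iff.1 hle
    rw [hΓ'w, EReal.top_add_of_ne_bot (by simp)]
    exact le_top
  · set fw : ℝ := (Γ w).toReal with hfwdef
    have hfw : Γ w = (fw : EReal) := (EReal.coe_toReal hwt (hΓbot w)).symm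
    set S : ℝ := ‖z - z₀‖ ^ 2 with hS
    set Q : ℝ := ‖w - z‖ ^ 2 with hQ
    set I : ℝ := ⟪z - z₀, w - z⟫ with hI
    -- Step: for all a ∈ (0,1], gz ≤ fw + I/lam + a * (Q/(2*lam))
    have hstep : ∀ a : ℝ, 0 < a → a ≤ 1 →
        gz ≤ fw + I / lam + a * (Q / (2 * lam)) := by
      intro a ha ha1
      set u := (1 - a) • z + a • w with hu
      have hconv := hΓconv z w (1 - a) a (by linarith) ha.le (by ring)
      rw [hgz, hfw] at hconv
      have hub : Γ u ≤ (((1 - a) * gz + a * fw : ℝ) : EReal) := by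
        push_cast
        exact hconv
      have hzu := (hz u).trans (add_le_add_left hub _)
      rw [hgz] at hzu
      have hnu : ‖u - z₀‖ ^ 2 = S + 2 * (a * I) + a ^ 2 * Q := by
        have hud : u - z₀ = (z - z₀) + a • (w - z) := by
          rw [hu]; module
        rw [hud, norm_add_sq_real, real_inner_smul_right, norm_smul]
        simp [hS, hQ, hI, mul_pow, sq_abs]
      rw [hnu] at hzu
      have hreal : gz + S / (2 * lam)
          ≤ (1 - a) * gz + a * fw + (S + 2 * (a * I) + a ^ 2 * Q) / (2 * lam) := by
        exact_mod_cast hzu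
      have hsplit : (S + 2 * (a * I) + a ^ 2 * Q) / (2 * lam)
          = S / (2 * lam) + a * (I / lam) + a ^ 2 * (Q / (2 * lam)) := by
        field_simp
      rw [hsplit] at hreal
      have hmul : a * gz ≤ a * (fw + I / lam + a * (Q / (2 * lam))) := by
        nlinarith [hreal]
      exact (mul_le_mul_iff_right₀ ha).1 hmul
    have hQ2 : (0:ℝ) ≤ Q / (2 * lam) := by positivity
    have hgrad : gz ≤ fw + I / lam := by
      apply le_of_forall_pos_le_add
      intro ε hε
      set a : ℝ := min 1 (ε / (Q / (2 * lam) + 1)) with ha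
      have ha0 : 0 < a := lt_min one_pos (by positivity)
      have ha1 : a ≤ 1 := min_le_left _ _
      have haε : a * (Q / (2 * lam)) ≤ ε := by
        have h1 : a ≤ ε / (Q / (2 * lam) + 1) := min_le_right _ _
        have h2 : a * (Q / (2 * lam)) ≤ ε / (Q / (2 * lam) + 1) * (Q / (2 * lam)) :=
          mul_le_mul_of_nonneg_right h1 hQ2
        have h3 : ε / (Q / (2 * lam) + 1) * (Q / (2 * lam)) ≤ ε := by
          rw [div_mul_eq_mul_div, div_le_iff₀ (by positivity)]
          nlinarith
        linarith
      have := hstep a ha0 ha1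
      linarith
    have hkey : gz + S / (2 * lam) + Q / (2 * lam) ≤ fw + ‖w - z₀‖ ^ 2 / (2 * lam) := by
      have hwz : ‖w - z₀‖ ^ 2 = S + 2 * I + Q := by
        have : w - z₀ = (z - z₀) + (w - z) := by module
        rw [this, norm_add_sq_real]
      rw [hwz]
      have hsplit : (S + 2 * I + Q) / (2 * lam)
          = S / (2 * lam) + I / lam + Q / (2 * lam) := by
        field_simp
      rw [hsplit]
      linarith
    set C : ℝ := ‖w - z₀‖ ^ 2 / (2 * lam) with hC
    have hC0 : (0:ℝ) ≤ C := by positivity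
    calc ((1 - β : ℝ) : EReal) * ℓ w
        + (β : EReal) * (Γ z + ((S / (2 * lam) : ℝ) : EReal) + ((Q / (2 * lam) : ℝ) : EReal))
        = ((1 - β : ℝ) : EReal) * ℓ w
          + (((β * (gz + S / (2 * lam) + Q / (2 * lam)) : ℝ)) : EReal) := by
          rw [hgz]; norm_cast
      _ ≤ ((1 - β : ℝ) : EReal) * ℓ w + (((β * fw + C : ℝ)) : EReal) := by
          apply add_le_add_right
          apply EReal.coe_le_coe_iff.2
          nlinarith [hkey]
      _ = ((β : EReal) * Γ w + ((1 - β : ℝ) : EReal) * ℓ w) + ((C : ℝ) : EReal) := by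
          rw [hfw, EReal.coe_add, EReal.coe_mul]; abel
      _ ≤ Γ' w + ((C : ℝ) : EReal) := add_le_add_left (hmaj w) _
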